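/- The functor Q : LT → SOp sending a Lawvere theory to its symmetric operad of operations is monadic: it has a left adjoint, reflects isomorphisms, and LT has and Q preserves coequalizers of Q-split pairs. -/

import Mathlib

/-- One step of the lexicographic decomposition of a sigma of `Fin`s. -/
def finSigmaSucc {k : ℕ} (ns : Fin (k + 1) → ℕ) :
    (Σ i : Fin (k + 1), Fin (ns i)) ≃ (Fin (ns 0) ⊕ Σ i : Fin k, Fin (ns i.succ)) where
  toFun p := Fin.cases (motive := fun i => Fin (ns i) → Fin (ns 0) ⊕ Σ i : Fin k, Fin (ns i.succ))
      (fun j => Sum.inl j) (fun i j => Sum.inr ⟨i, j⟩) p.1 p.2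
  invFun q := q.elim (fun j => ⟨0, j⟩) (fun q => ⟨q.1.succ, q.2⟩)
  left_inv := by rintro ⟨i, j⟩; induction i using Fin.cases <;> simp
  right_inv := by rintro (j | ⟨i, j⟩) <;> simp

/-- The lexicographic identification of `Σ i, Fin (ns i)` with `Fin (∑ i, ns i)`. -/
def finSigma : ∀ {k : ℕ} (ns : Fin k → ℕ), (Σ i : Fin k, Fin (ns i)) ≃ Fin (∑ i, ns i)
  | 0, ns => (Equiv.equivOfIsEmpty _ _ : (Σ i : Fin 0, Fin (ns i)) ≃ Fin 0).trans
      (finCongr (by simp))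
  | k + 1, ns =>
    (finSigmaSucc ns).trans <|
      ((Equiv.refl (Fin (ns 0))).sumCongr (finSigma fun i => ns i.succ)).trans <|
        finSumFinEquiv.trans (finCongr (Fin.sum_univ_succ ns).symm)

/-- Operadic composition of permutations: on the lexicographic block decomposition,
`⟨i, r⟩ ↦ ⟨τ i, σs (τ i) r⟩`. -/
def symComp {k : ℕ} (ns : Fin k → ℕ) (σs : ∀ i, Equiv.Perm (Fin (ns i)))
    (τ : Equiv.Perm (Fin k)) : Equiv.Perm (Fin (∑ i, ns i)) :=
  (finCongr (Equiv.sum_comp τ ns)).symm.trans <|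
    ((finSigma fun i => ns (τ i)).symm.trans
      ((Equiv.sigmaCongr τ fun i => σs (τ i)).trans (finSigma ns)))

/-- A symmetric operad. -/
structure SymOperad where
  ops : ℕ → Type
  unit : ops 1
  comp : ∀ {k : ℕ} (ns : Fin k → ℕ), (∀ i, ops (ns i)) → ops k → ops (∑ i, ns i)
  act : ∀ {n : ℕ}, Equiv.Perm (Fin n) → ops n → ops n
  act_one : ∀ {n : ℕ} (x : ops n), act (Equiv.refl (Fin n)) x = x
  act_mul : ∀ {n : ℕ} (σ τ : Equiv.Perm (Fin n)) (x : ops n),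
    act (σ * τ) x = act σ (act τ x)
  comp_unit_left : ∀ {n : ℕ} (g : ops n),
    HEq (comp (fun _ : Fin n => 1) (fun _ => unit) g) g
  comp_unit_right : ∀ {n : ℕ} (g : ops n),
    HEq (comp (fun _ : Fin 1 => n) (fun _ => g) unit) g
  comp_assoc : ∀ {k : ℕ} (ns : Fin k → ℕ) (ms : ∀ i, Fin (ns i) → ℕ)
    (hs : ∀ i j, ops (ms i j)) (gs : ∀ i, ops (ns i)) (f : ops k),
    HEq (comp (fun p => ms ((finSigma ns).symm p).1 ((finSigma ns).symm p).2)
          (fun p => hs ((finSigma ns).symm p).1 ((finSigma ns).symm p).2)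
          (comp ns gs f))
        (comp (fun i => ∑ j, ms i j) (fun i => comp (ms i) (hs i) (gs i)) f)
  equiv_inner : ∀ {k : ℕ} (ns : Fin k → ℕ) (σs : ∀ i, Equiv.Perm (Fin (ns i)))
    (gs : ∀ i, ops (ns i)) (f : ops k),
    comp ns (fun i => act (σs i) (gs i)) f
      = act (symComp ns σs (Equiv.refl (Fin k))) (comp ns gs f)
  equiv_outer : ∀ {k : ℕ} (ns : Fin k → ℕ) (τ : Equiv.Perm (Fin k))
    (gs : ∀ i, ops (ns i)) (f : ops k),
    HEq (comp (fun i => ns (τ i)) (fun i => gs (τ i)) (act τ f))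
        (act (symComp ns (fun i => Equiv.refl (Fin (ns i))) τ) (comp ns gs f))

/-- Composition `a ∗ b` of unary operations of an operad. -/
def SymOperad.comp1 (O : SymOperad) (a b : O.ops 1) : O.ops 1 :=
  cast (congrArg O.ops (by simp)) (O.comp (fun _ : Fin 1 => 1) (fun _ => a) b)

/-- Composition `⟨c 1, …, c r⟩ ∗ h` of an `r`-ary operation with unary operations. -/
def SymOperad.unaryComp (O : SymOperad) {r : ℕ} (c : Fin r → O.ops 1) (h : O.ops r) :
    O.ops r :=
  cast (congrArg O.ops (by simp)) (O.comp (fun _ : Fin r => 1) c h)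
/-- A Lawvere theory: a category with objects the natural numbers where `n` is the
`n`-fold power of `1` with chosen projections.  `comp f g` is `f` followed by `g`. -/
structure LawTheory where
  Hom : ℕ → ℕ → Type
  id : ∀ n : ℕ, Hom n n
  comp : ∀ {a b c : ℕ}, Hom a b → Hom b c → Hom a c
  id_comp : ∀ {a b : ℕ} (f : Hom a b), comp (id a) f = f
  comp_id : ∀ {a b : ℕ} (f : Hom a b), comp f (id b) = f
  assoc : ∀ {a b c d : ℕ} (f : Hom a b) (g : Hom b c) (h : Hom c d),
    comp (comp f g) h = comp f (comp g h)
  proj : ∀ (n : ℕ), Fin n → Hom n 1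
  tuple : ∀ {a n : ℕ}, (Fin n → Hom a 1) → Hom a n
  tuple_proj : ∀ {a n : ℕ} (fs : Fin n → Hom a 1) (i : Fin n),
    comp (tuple fs) (proj n i) = fs i
  tuple_eta : ∀ {a n : ℕ} (g : Hom a n),
    tuple (fun i => comp g (proj n i)) = g

namespace LawTheory

variable (T : LawTheory)

/-- The structural morphism `π_φ : n → m` induced by a function `φ : (m] → (n]`. -/
def pi {n m : ℕ} (φ : Fin m → Fin n) : T.Hom n m :=
  T.tuple fun i => T.proj n (φ i)

/-- The product map `f₁ × ⋯ × f_k : ∑ ns i → k` of operations `fs i : ns i → 1`,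
formed via the chosen projections and the lexicographic block decomposition. -/
def prodMap {k : ℕ} (ns : Fin k → ℕ) (fs : ∀ i, T.Hom (ns i) 1) :
    T.Hom (∑ i, ns i) k :=
  T.tuple fun i => T.comp (T.pi fun j : Fin (ns i) => finSigma ns ⟨i, j⟩) (fs i)

/-- Operadic composition of the operations of a Lawvere theory:
`⟨f₁,…,f_k⟩ ∗ f = f ∘ (f₁ × ⋯ × f_k)`. -/
def opComp {k : ℕ} (ns : Fin k → ℕ) (fs : ∀ i, T.Hom (ns i) 1) (f : T.Hom k 1) :
    T.Hom (∑ i, ns i) 1 :=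
  T.comp (T.prodMap ns fs) f

/-- The action `σ · f = f ∘ π_σ` of a permutation on an operation. -/
def opAct {n : ℕ} (σ : Equiv.Perm (Fin n)) (f : T.Hom n 1) : T.Hom n 1 :=
  T.comp (T.pi ⇑σ) f

/-- A morphism `f : a → b` is invertible (an isomorphism). -/
def IsInvertible {a b : ℕ} (f : T.Hom a b) : Prop :=
  ∃ g : T.Hom b a, T.comp f g = T.id a ∧ T.comp g f = T.id b

/-- Structural morphisms: the closure under isomorphism of the image of the unique
interpretation from the initial Lawvere theory `𝔽ᵒᵖ`. -/
def Structural {n m : ℕ} (f : T.Hom n m) : Prop :=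
  ∃ (φ : Fin m → Fin n) (u : T.Hom n n) (v : T.Hom m m),
    T.IsInvertible u ∧ T.IsInvertible v ∧ f = T.comp u (T.comp (T.pi φ) v)

/-- `e` is left orthogonal to `m`: unique diagonal fillers exist. -/
def Orthogonal {a b c d : ℕ} (e : T.Hom a b) (m : T.Hom c d) : Prop :=
  ∀ (u : T.Hom a c) (v : T.Hom b d), T.comp u m = T.comp e v →
    ∃! w : T.Hom b c, T.comp e w = u ∧ T.comp w m = v

/-- Analytic morphisms: those right orthogonal to all structural morphisms. -/
def Analytic {c d : ℕ} (f : T.Hom c d) : Prop :=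
  ∀ {a b : ℕ} (e : T.Hom a b), T.Structural e → T.Orthogonal e f

/-- The canonical map `ρ_n : S_n × Aut(1)ⁿ → Hom(n,n)`,
`(σ, a) ↦ (a₁ × ⋯ × a_n) ∘ π_σ`. -/
def rho (n : ℕ)
    (p : Equiv.Perm (Fin n) × (Fin n → {f : T.Hom 1 1 // T.IsInvertible f})) :
    T.Hom n n :=
  T.comp (T.pi ⇑p.1) (T.tuple fun i => T.comp (T.proj n i) (p.2 i).1)

/-- `T` has simple automorphisms: each `ρ_n` is a bijection onto the automorphisms. -/
def HasSimpleAut : Prop :=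
  ∀ n : ℕ, Function.Injective (T.rho n) ∧
    Set.range (T.rho n) = {f : T.Hom n n | T.IsInvertible f}

/-- `T` is an analytic Lawvere theory: structural and analytic morphisms form a
factorization system and `T` has simple automorphisms. -/
def IsAnalyticTheory : Prop :=
  (∀ {n m : ℕ} (f : T.Hom n m), ∃ (k : ℕ) (e : T.Hom n k) (g : T.Hom k m),
      T.Structural e ∧ T.Analytic g ∧ f = T.comp e g) ∧ T.HasSimpleAut

end LawTheory

/-- A morphism of symmetric operads. -/
structure OperadHom (O O' : SymOperad) where
  map : ∀ n : ℕ, O.ops n → O'.ops n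
  map_unit : map 1 O.unit = O'.unit
  map_comp : ∀ {k : ℕ} (ns : Fin k → ℕ) (gs : ∀ i, O.ops (ns i)) (f : O.ops k),
    map _ (O.comp ns gs f) = O'.comp ns (fun i => map _ (gs i)) (map k f)
  map_act : ∀ {n : ℕ} (σ : Equiv.Perm (Fin n)) (x : O.ops n),
    map n (O.act σ x) = O'.act σ (map n x)

/-- An interpretation of Lawvere theories: an identity-on-objects functor
preserving the chosen projections. -/
structure LawHom (T T' : LawTheory) where
  map : ∀ {a b : ℕ}, T.Hom a b → T'.Hom a b
  map_id : ∀ n : ℕ, map (T.id n) = T'.id n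
  map_comp : ∀ {a b c : ℕ} (f : T.Hom a b) (g : T.Hom b c),
    map (T.comp f g) = T'.comp (map f) (map g)
  map_proj : ∀ (n : ℕ) (i : Fin n), map (T.proj n i) = T'.proj n i

/-- `S` is the symmetric operad of operations of the Lawvere theory `T`. -/
def IsOperadOf (T : LawTheory) (S : SymOperad) : Prop :=
  S.ops = (fun n => T.Hom n 1) ∧ HEq S.unit (T.id 1) ∧
    HEq (@SymOperad.comp S) (@LawTheory.opComp T) ∧
    HEq (@SymOperad.act S) (@LawTheory.opAct T)
/-- A family of maps `O_n → T(n,1)` which is a morphism of symmetric operads from `O`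
to the operad of operations `Q(T)` of the Lawvere theory `T`. -/
def IsOperadMapToQ (O : SymOperad) (T : LawTheory)
    (h : ∀ n : ℕ, O.ops n → T.Hom n 1) : Prop :=
  h 1 O.unit = T.id 1 ∧
  (∀ {k : ℕ} (ns : Fin k → ℕ) (gs : ∀ i, O.ops (ns i)) (f : O.ops k),
    h _ (O.comp ns gs f) = T.opComp ns (fun i => h _ (gs i)) (h k f)) ∧
  (∀ {n : ℕ} (σ : Equiv.Perm (Fin n)) (g : O.ops n),
    h n (O.act σ g) = T.opAct σ (h n g))

/-- A family of maps `T(n,1) → O_n` which is a morphism of symmetric operads from the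
operad of operations `Q(T)` of the Lawvere theory `T` to `O`. -/
def IsQOperadHom (T : LawTheory) (O : SymOperad)
    (q : ∀ n : ℕ, T.Hom n 1 → O.ops n) : Prop :=
  q 1 (T.id 1) = O.unit ∧
  (∀ {k : ℕ} (ns : Fin k → ℕ) (fs : ∀ i, T.Hom (ns i) 1) (f : T.Hom k 1),
    q _ (T.opComp ns fs f) = O.comp ns (fun i => q _ (fs i)) (q k f)) ∧
  (∀ {n : ℕ} (σ : Equiv.Perm (Fin n)) (f : T.Hom n 1),
    q n (T.opAct σ f) = O.act σ (q n f))
namespace LawTheory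

variable {T : LawTheory}

theorem hom_ext {a n : ℕ} {g g' : T.Hom a n}
    (h : ∀ i, T.comp g (T.proj n i) = T.comp g' (T.proj n i)) : g = g' := by
  rw [← T.tuple_eta g, ← T.tuple_eta g']
  exact congrArg T.tuple (funext h)

theorem comp_tuple {a b n : ℕ} (x : T.Hom a b) (fs : Fin n → T.Hom b 1) :
    T.comp x (T.tuple fs) = T.tuple fun i => T.comp x (fs i) := by
  apply hom_ext
  intro i
  rw [T.assoc, T.tuple_proj, T.tuple_proj]

theorem tuple_proj_self {n : ℕ} : T.tuple (fun i => T.proj n i) = T.id n := by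
  have h : (fun i => T.proj n i) = fun i => T.comp (T.id n) (T.proj n i) := by
    funext i; rw [T.id_comp]
  rw [h, T.tuple_eta]

theorem tuple_const {a : ℕ} (hp : T.proj 1 0 = T.id 1) (A : T.Hom a 1) :
    T.tuple (fun _ : Fin 1 => A) = A := by
  apply hom_ext (n := 1)
  intro i
  rw [Subsingleton.elim i 0, T.tuple_proj, hp, T.comp_id]

end LawTheory

namespace LawHom

variable {T T' : LawTheory} (F : LawHom T T')

theorem map_tuple {a n : ℕ} (fs : Fin n → T.Hom a 1) :
    F.map (T.tuple fs) = T'.tuple fun i => F.map (fs i) := by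
  apply LawTheory.hom_ext
  intro i
  rw [T'.tuple_proj, ← F.map_proj, ← F.map_comp, T.tuple_proj]

theorem map_pi {n m : ℕ} (φ : Fin m → Fin n) : F.map (T.pi φ) = T'.pi φ := by
  unfold LawTheory.pi
  rw [map_tuple]
  simp only [F.map_proj]

theorem map_prodMap {k : ℕ} (ns : Fin k → ℕ) (fs : ∀ i, T.Hom (ns i) 1) :
    F.map (T.prodMap ns fs) = T'.prodMap ns fun i => F.map (fs i) := by
  unfold LawTheory.prodMap
  rw [map_tuple]
  simp only [F.map_comp, map_pi]

theorem map_opComp {k : ℕ} (ns : Fin k → ℕ) (fs : ∀ i, T.Hom (ns i) 1) (f : T.Hom k 1) :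
    F.map (T.opComp ns fs f) = T'.opComp ns (fun i => F.map (fs i)) (F.map f) := by
  unfold LawTheory.opComp
  rw [F.map_comp, map_prodMap]

theorem map_opAct {n : ℕ} (σ : Equiv.Perm (Fin n)) (f : T.Hom n 1) :
    F.map (T.opAct σ f) = T'.opAct σ (F.map f) := by
  unfold LawTheory.opAct
  rw [F.map_comp, map_pi]

end LawHom

theorem LawHom.ext {T T' : LawTheory} {F G : LawHom T T'}
    (h : ∀ (a b : ℕ) (f : T.Hom a b), F.map f = G.map f) : F = G := by
  obtain ⟨m, _, _, _⟩ := F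
  obtain ⟨m', _, _, _⟩ := G
  have hm : @m = @m' := by
    funext a b f
    exact h a b f
  subst hm
  rfl

/-- Any Lawvere theory receiving an operad map from an operad has `proj 1 0 = id 1`. -/
theorem proj_one_eq_id (O : SymOperad) {T : LawTheory} (h : ∀ n : ℕ, O.ops n → T.Hom n 1)
    (H : IsOperadMapToQ O T h) : T.proj 1 0 = T.id 1 := by
  obtain ⟨hu, hc, -⟩ := H
  have hN : (∑ i : Fin 1, (fun _ : Fin 1 => 1) i) = 1 := by simp
  have key : ∀ (m : ℕ), m = 1 → ∀ (x : O.ops m), HEq x O.unit → HEq (h m x) (T.id 1) := by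
    rintro m rfl x hx
    rw [eq_of_heq hx, hu]
  have h1 : HEq (h _ (O.comp (fun _ : Fin 1 => 1) (fun _ => O.unit) O.unit)) (T.id 1) :=
    key _ hN _ (O.comp_unit_right O.unit)
  have hc1 := hc (fun _ : Fin 1 => 1) (fun _ => O.unit) O.unit
  rw [hu] at hc1
  have h2 : HEq (T.opComp (fun _ : Fin 1 => 1) (fun _ => T.id 1) (T.id 1)) (T.id 1) :=
    hc1 ▸ h1
  have aux : ∀ (m : ℕ), m = 1 → ∀ (φ : Fin 1 → Fin 1 → Fin m),
      HEq (T.tuple fun i : Fin 1 => T.tuple fun j : Fin 1 => T.proj m (φ i j)) (T.id 1) →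
      T.proj 1 0 = T.id 1 := by
    rintro m rfl φ hh
    have h4 := eq_of_heq hh
    have hφ : ∀ (i j : Fin 1), φ i j = 0 := fun i j => Subsingleton.elim _ _
    simp only [hφ] at h4
    have PsiPhi : ∀ A : T.Hom 1 1, T.tuple (fun _ : Fin 1 => T.comp A (T.proj 1 0)) = A := by
      intro A
      have h5 : (fun _ : Fin 1 => T.comp A (T.proj 1 0)) = fun i => T.comp A (T.proj 1 i) := by
        funext i
        rw [Subsingleton.elim i 0]
      rw [h5, T.tuple_eta]
    have e1 := congrArg (fun X : T.Hom 1 1 => T.comp X (T.proj 1 0)) h4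
    rw [T.tuple_proj _ 0, T.id_comp] at e1
    have e2 := PsiPhi (T.id 1)
    simp only [T.id_comp] at e2
    exact e1.symm.trans e2
  refine aux _ hN (fun i j => finSigma (fun _ : Fin 1 => 1) ⟨i, j⟩) ?_
  simpa [LawTheory.opComp, LawTheory.prodMap, LawTheory.pi, T.comp_id] using h2

namespace QM

/-- Terms over an operad. -/
inductive FreeTm (O : SymOperad) (n : ℕ) : Type
  | var (i : Fin n) : FreeTm O n
  | op {k : ℕ} (x : O.ops k) (args : Fin k → FreeTm O n) : FreeTm O n

variable {O : SymOperad}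

/-- Interpretation of a term in a Lawvere theory equipped with an operad map. -/
def interp (T : LawTheory) (h : ∀ m : ℕ, O.ops m → T.Hom m 1) {n : ℕ} :
    FreeTm O n → T.Hom n 1
  | FreeTm.var i => T.proj _ i
  | FreeTm.op x args => T.comp (T.tuple fun i => interp T h (args i)) (h _ x)

/-- Substitution of terms. -/
def subst {a b : ℕ} (f : Fin b → FreeTm O a) : FreeTm O b → FreeTm O a
  | FreeTm.var i => f i
  | FreeTm.op x args => FreeTm.op x fun i => subst f (args i)

theorem interp_var (T : LawTheory) (h : ∀ m : ℕ, O.ops m → T.Hom m 1) {n : ℕ} (i : Fin n) :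
    interp T h (FreeTm.var i) = T.proj n i := by simp [interp]

theorem interp_op (T : LawTheory) (h : ∀ m : ℕ, O.ops m → T.Hom m 1) {n k : ℕ}
    (x : O.ops k) (args : Fin k → FreeTm O n) :
    interp T h (FreeTm.op x args) = T.comp (T.tuple fun i => interp T h (args i)) (h k x) := by
  simp [interp]

theorem interp_subst (T : LawTheory) (h : ∀ m : ℕ, O.ops m → T.Hom m 1)
    {a b : ℕ} (f : Fin b → FreeTm O a) (t : FreeTm O b) :
    interp T h (subst f t) = T.comp (T.tuple fun i => interp T h (f i)) (interp T h t) := by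
  induction t with
  | var i =>
    simp only [subst, interp_var]
    rw [T.tuple_proj]
  | op x args ih =>
    simp only [subst, interp_op]
    rw [← T.assoc, LawTheory.comp_tuple]
    simp only [ih]

/-- Semantic equality of terms. -/
def relF (O : SymOperad) (n : ℕ) (t t' : FreeTm O n) : Prop :=
  ∀ (T : LawTheory) (h : ∀ m : ℕ, O.ops m → T.Hom m 1),
    IsOperadMapToQ O T h → interp T h t = interp T h t'

instance setoidF (O : SymOperad) (n : ℕ) : Setoid (FreeTm O n) :=
  ⟨relF O n, fun _ _ _ _ => rfl, fun h12 T h H => (h12 T h H).symm,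
    fun h12 h23 T h H => (h12 T h H).trans (h23 T h H)⟩

/-- Hom-sets of the free Lawvere theory into arity 1. -/
abbrev FQ (O : SymOperad) (n : ℕ) : Type := Quotient (setoidF O n)

def mk {O : SymOperad} {n : ℕ} (t : FreeTm O n) : FQ O n := Quotient.mk (setoidF O n) t

def interpQ (T : LawTheory) (h : ∀ m : ℕ, O.ops m → T.Hom m 1)
    (H : IsOperadMapToQ O T h) {n : ℕ} : FQ O n → T.Hom n 1 :=
  Quotient.lift (interp T h) fun _ _ hab => hab T h H

theorem interpQ_mk (T : LawTheory) (h : ∀ m : ℕ, O.ops m → T.Hom m 1)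
    (H : IsOperadMapToQ O T h) {n : ℕ} (t : FreeTm O n) :
    interpQ T h H (mk t) = interp T h t := rfl

theorem interpQ_var (T : LawTheory) (h : ∀ m : ℕ, O.ops m → T.Hom m 1)
    (H : IsOperadMapToQ O T h) {n : ℕ} (i : Fin n) :
    interpQ T h H (mk (FreeTm.var i)) = T.proj n i := by
  rw [interpQ_mk, interp_var]

theorem interp_gen (T : LawTheory) (h : ∀ m : ℕ, O.ops m → T.Hom m 1) {n : ℕ} (g : O.ops n) :
    interp T h (FreeTm.op g fun i => FreeTm.var i) = h n g := by
  rw [interp_op]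
  simp only [interp_var]
  rw [LawTheory.tuple_proj_self, T.id_comp]

theorem interpQ_gen (T : LawTheory) (h : ∀ m : ℕ, O.ops m → T.Hom m 1)
    (H : IsOperadMapToQ O T h) {n : ℕ} (g : O.ops n) :
    interpQ T h H (mk (FreeTm.op g fun i => FreeTm.var i)) = h n g := interp_gen T h g

theorem eqQ {n : ℕ} {x y : FQ O n}
    (hxy : ∀ (T : LawTheory) (h : ∀ m : ℕ, O.ops m → T.Hom m 1)
      (H : IsOperadMapToQ O T h), interpQ T h H x = interpQ T h H y) : x = y := by
  revert hxy
  induction x using Quotient.ind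
  induction y using Quotient.ind
  intro hxy
  exact Quotient.sound fun T h H => hxy T h H

theorem interp_out (T : LawTheory) (h : ∀ m : ℕ, O.ops m → T.Hom m 1)
    (H : IsOperadMapToQ O T h) {n : ℕ} (x : FQ O n) :
    interp T h (Quotient.out x) = interpQ T h H x := by
  conv_rhs => rw [← Quotient.out_eq x]
  rfl

theorem interpQ_substRaw (T : LawTheory) (h : ∀ m : ℕ, O.ops m → T.Hom m 1)
    (H : IsOperadMapToQ O T h) {a b : ℕ} (X : Fin b → FQ O a) (y : FQ O b) :
    interpQ T h H (mk (subst (fun i => Quotient.out (X i)) (Quotient.out y))) =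
      T.comp (T.tuple fun i => interpQ T h H (X i)) (interpQ T h H y) := by
  rw [interpQ_mk, interp_subst]
  simp only [interp_out T h H]

/-- The free Lawvere theory on an operad. -/
@[reducible] noncomputable def freeT (O : SymOperad) : LawTheory where
  Hom a b := Fin b → FQ O a
  id n := fun i => mk (FreeTm.var i)
  comp {a b c} X Y := fun j => mk (subst (fun i => Quotient.out (X i)) (Quotient.out (Y j)))
  proj n i := fun _ => mk (FreeTm.var i)
  tuple {a n} fs := fun i => fs i 0
  id_comp := by
    intro a b f
    funext j
    apply eqQ
    intro T h H
    rw [interpQ_substRaw]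
    simp only [interpQ_var]
    rw [LawTheory.tuple_proj_self, T.id_comp]
  comp_id := by
    intro a b f
    funext j
    apply eqQ
    intro T h H
    rw [interpQ_substRaw]
    simp only [interpQ_var]
    rw [T.tuple_proj]
  assoc := by
    intro a b c d f g k
    funext j
    apply eqQ
    intro T h H
    simp only [interpQ_substRaw]
    rw [← LawTheory.comp_tuple, T.assoc]
  tuple_proj := by
    intro a n fs i
    funext j
    rw [Subsingleton.elim j 0]
    apply eqQ
    intro T h H
    rw [interpQ_substRaw]
    simp only [interpQ_var]
    rw [T.tuple_proj]
  tuple_eta := by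
    intro a n g
    funext i
    apply eqQ
    intro T h H
    rw [interpQ_substRaw]
    simp only [interpQ_var]
    rw [T.tuple_proj]

theorem freeT_id (O : SymOperad) (n : ℕ) :
    (freeT O).id n = fun i => mk (FreeTm.var i) := rfl

theorem freeT_proj (O : SymOperad) (n : ℕ) (i : Fin n) :
    (freeT O).proj n i = fun _ => mk (FreeTm.var i) := rfl

theorem freeT_comp (O : SymOperad) {a b c : ℕ} (X : (freeT O).Hom a b) (Y : (freeT O).Hom b c) :
    (freeT O).comp X Y =
      fun j => mk (subst (fun i => Quotient.out (X i)) (Quotient.out (Y j))) := rfl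

theorem freeT_tuple (O : SymOperad) {a n : ℕ} (fs : Fin n → (freeT O).Hom a 1) :
    (freeT O).tuple fs = fun i => fs i 0 := rfl

/-- The unit of the adjunction. -/
def unitF (O : SymOperad) {n : ℕ} (g : O.ops n) : (freeT O).Hom n 1 :=
  fun _ => mk (FreeTm.op g fun i => FreeTm.var i)

theorem unitF_unit (O : SymOperad) : unitF O O.unit = (freeT O).id 1 := by
  funext j
  apply eqQ
  intro T h H
  show interpQ T h H (mk (FreeTm.op O.unit fun i => FreeTm.var i)) =
    interpQ T h H (mk (FreeTm.var j))
  rw [interpQ_gen T h H, interpQ_var, H.1, Subsingleton.elim j 0, proj_one_eq_id O h H]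

theorem unitF_comp (O : SymOperad) {k : ℕ} (ns : Fin k → ℕ) (gs : ∀ i, O.ops (ns i))
    (f : O.ops k) :
    unitF O (O.comp ns gs f) = (freeT O).opComp ns (fun i => unitF O (gs i)) (unitF O f) := by
  funext j
  apply eqQ
  intro T h H
  have hL : interpQ T h H (unitF O (O.comp ns gs f) j) =
      T.opComp ns (fun i => h _ (gs i)) (h k f) := by
    show interpQ T h H (mk (FreeTm.op (O.comp ns gs f) fun i => FreeTm.var i)) = _
    rw [interpQ_gen T h H]
    exact H.2.1 ns gs f
  rw [hL]
  simp only [LawTheory.opComp, LawTheory.prodMap, LawTheory.pi, freeT_comp, freeT_tuple,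
    freeT_proj, freeT_id, unitF, interpQ_substRaw, interpQ_var, interpQ_gen T h H,
    LawTheory.tuple_proj_self, T.id_comp]

theorem unitF_act (O : SymOperad) {n : ℕ} (σ : Equiv.Perm (Fin n)) (g : O.ops n) :
    unitF O (O.act σ g) = (freeT O).opAct σ (unitF O g) := by
  funext j
  apply eqQ
  intro T h H
  have hL : interpQ T h H (unitF O (O.act σ g) j) = T.opAct σ (h n g) := by
    show interpQ T h H (mk (FreeTm.op (O.act σ g) fun i => FreeTm.var i)) = _
    rw [interpQ_gen T h H]
    exact H.2.2 σ g
  rw [hL]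
  simp only [LawTheory.opAct, LawTheory.pi, freeT_comp, freeT_tuple, freeT_proj, freeT_id,
    unitF, interpQ_substRaw, interpQ_var, interpQ_gen T h H,
    LawTheory.tuple_proj_self, T.id_comp]

/-- The interpretation functor out of the free theory. -/
def liftF (O : SymOperad) (T' : LawTheory) (h : ∀ m : ℕ, O.ops m → T'.Hom m 1)
    (H : IsOperadMapToQ O T' h) : LawHom (freeT O) T' where
  map {a b} f := T'.tuple fun i => interpQ T' h H (f i)
  map_id n := by
    show T'.tuple (fun i => interpQ T' h H (mk (FreeTm.var i))) = T'.id n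
    simp only [interpQ_var]
    exact LawTheory.tuple_proj_self
  map_comp {a b c} f g := by
    show T'.tuple (fun j => interpQ T' h H
        (mk (subst (fun i => Quotient.out (f i)) (Quotient.out (g j))))) = _
    simp only [interpQ_substRaw]
    rw [← LawTheory.comp_tuple]
  map_proj n i := by
    show T'.tuple (fun _ : Fin 1 => interpQ T' h H (mk (FreeTm.var i))) = T'.proj n i
    simp only [interpQ_var]
    exact LawTheory.tuple_const (proj_one_eq_id O h H) _

theorem liftF_unitF (O : SymOperad) (T' : LawTheory) (h : ∀ m : ℕ, O.ops m → T'.Hom m 1)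
    (H : IsOperadMapToQ O T' h) {n : ℕ} (g : O.ops n) :
    (liftF O T' h H).map (unitF O g) = h n g := by
  show T'.tuple (fun _ : Fin 1 =>
      interpQ T' h H (mk (FreeTm.op g fun i => FreeTm.var i))) = h n g
  simp only [interpQ_gen T' h H]
  exact LawTheory.tuple_const (proj_one_eq_id O h H) _

theorem liftF_unique (O : SymOperad) (T' : LawTheory) (h : ∀ m : ℕ, O.ops m → T'.Hom m 1)
    (H : IsOperadMapToQ O T' h) (F' : LawHom (freeT O) T')
    (hF' : ∀ (n : ℕ) (g : O.ops n), F'.map (unitF O g) = h n g) : F' = liftF O T' h H := by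
  have key : ∀ {a : ℕ} (t : FreeTm O a), F'.map (fun _ : Fin 1 => mk t) = interp T' h t := by
    intro a t
    induction t with
    | var i =>
      rw [interp_var]
      exact F'.map_proj a i
    | op x args ih =>
      have hdec : (fun _ : Fin 1 => (mk (FreeTm.op x args) : FQ O a)) =
          (freeT O).comp ((freeT O).tuple fun r => fun _ : Fin 1 => (mk (args r) : FQ O a))
            (unitF O x) := by
        funext j
        apply eqQ
        intro Tb hb Hb
        simp only [freeT_comp, freeT_tuple, unitF, interpQ_substRaw, interpQ_mk,
          interpQ_gen Tb hb Hb, interp_op, interp_subst, interp_out Tb hb Hb]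
      rw [hdec, F'.map_comp, LawHom.map_tuple, hF' _ x]
      simp only [freeT_tuple, ih]
      rw [interp_op]
  apply LawHom.ext
  intro a b f
  have hf : f = (freeT O).tuple fun i => fun _ : Fin 1 => (mk (Quotient.out (f i)) : FQ O a) := by
    funext i
    exact (Quotient.out_eq (f i)).symm
  rw [hf, LawHom.map_tuple, LawHom.map_tuple]
  congr 1
  funext i
  rw [key]
  show _ = T'.tuple fun _ : Fin 1 => interpQ T' h H (mk (Quotient.out (f i)))
  rw [LawTheory.tuple_const (proj_one_eq_id O h H)]
  rfl

theorem part1 (O : SymOperad) :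
    ∃ (T : LawTheory) (η : ∀ n : ℕ, O.ops n → T.Hom n 1),
      IsOperadMapToQ O T η ∧
      ∀ (T' : LawTheory) (h : ∀ n : ℕ, O.ops n → T'.Hom n 1),
        IsOperadMapToQ O T' h →
        ∃! F : LawHom T T', ∀ (n : ℕ) (g : O.ops n), F.map (η n g) = h n g := by
  refine ⟨freeT O, fun n g => unitF O g,
    ⟨unitF_unit O, fun ns gs f => unitF_comp O ns gs f, fun σ g => unitF_act O σ g⟩, ?_⟩
  intro T' h H
  exact ⟨liftF O T' h H, fun n g => liftF_unitF O T' h H g,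
    fun F' hF' => liftF_unique O T' h H F' hF'⟩

end QM

namespace QM

/-- Componentwise image of a morphism under `q`. -/
def qhat (T : LawTheory) (O : SymOperad) (q : ∀ n : ℕ, T.Hom n 1 → O.ops n)
    {a b : ℕ} (x : T.Hom a b) : Fin b → O.ops a := fun i => q a (T.comp x (T.proj b i))

/-- Componentwise lift of a family of operations under `s`. -/
def shat (T : LawTheory) (O : SymOperad) (s : ∀ n : ℕ, O.ops n → T.Hom n 1)
    {a b : ℕ} (α : Fin b → O.ops a) : T.Hom a b := T.tuple fun i => s a (α i)

end QM

/-- the functor `Q : LT → SOp` sending a Lawvere theory to its operad of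
operations is monadic: it has a left adjoint, it reflects isomorphisms, and `LT` has
and `Q` preserves coequalizers of `Q`-split pairs. -/
theorem Q_monadic :
    -- Q has a left adjoint (the span theory, with its universal property)
    (∀ O : SymOperad, ∃ (T : LawTheory) (η : ∀ n : ℕ, O.ops n → T.Hom n 1),
      IsOperadMapToQ O T η ∧
      ∀ (T' : LawTheory) (h : ∀ n : ℕ, O.ops n → T'.Hom n 1),
        IsOperadMapToQ O T' h →
        ∃! F : LawHom T T', ∀ (n : ℕ) (g : O.ops n), F.map (η n g) = h n g) ∧
    -- Q reflects isomorphisms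
    (∀ (T T' : LawTheory) (F : LawHom T T'),
      (∀ n : ℕ, Function.Bijective (fun f : T.Hom n 1 => F.map f)) →
      ∃ G : LawHom T' T,
        (∀ (a b : ℕ) (f : T.Hom a b), G.map (F.map f) = f) ∧
        (∀ (a b : ℕ) (g : T'.Hom a b), F.map (G.map g) = g)) ∧
    -- LT has and Q preserves coequalizers of Q-split pairs
    (∀ (T' T : LawTheory) (F F' : LawHom T' T) (O : SymOperad)
        (q : ∀ n : ℕ, T.Hom n 1 → O.ops n) (s : ∀ n : ℕ, O.ops n → T.Hom n 1)
        (t : ∀ n : ℕ, T.Hom n 1 → T'.Hom n 1),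
      IsQOperadHom T O q → IsOperadMapToQ O T s →
      (t 1 (T.id 1) = T'.id 1) →
      (∀ (k : ℕ) (ns : Fin k → ℕ) (fs : ∀ i, T.Hom (ns i) 1) (f : T.Hom k 1),
        t _ (T.opComp ns fs f) = T'.opComp ns (fun i => t _ (fs i)) (t k f)) →
      (∀ (n : ℕ) (σ : Equiv.Perm (Fin n)) (f : T.Hom n 1),
        t n (T.opAct σ f) = T'.opAct σ (t n f)) →
      -- split coequalizer equations in SOp
      (∀ (n : ℕ) (x : T'.Hom n 1), q n (F.map x) = q n (F'.map x)) →
      (∀ (n : ℕ) (y : O.ops n), q n (s n y) = y) →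
      (∀ (n : ℕ) (b : T.Hom n 1), F.map (t n b) = b) →
      (∀ (n : ℕ) (b : T.Hom n 1), F'.map (t n b) = s n (q n b)) →
      ∃ (T₀ : LawTheory) (qh : LawHom T T₀),
        -- qh coequalizes F and F' in LT
        (∀ (a b : ℕ) (x : T'.Hom a b), qh.map (F.map x) = qh.map (F'.map x)) ∧
        (∀ (T₂ : LawTheory) (p : LawHom T T₂),
          (∀ (a b : ℕ) (x : T'.Hom a b), p.map (F.map x) = p.map (F'.map x)) →
          ∃! k : LawHom T₀ T₂,
            ∀ (a b : ℕ) (y : T.Hom a b), k.map (qh.map y) = p.map y) ∧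
        -- Q sends qh to the given split coequalizer (up to isomorphism over q)
        ∃ j : ∀ n : ℕ, T₀.Hom n 1 → O.ops n,
          IsQOperadHom T₀ O j ∧ (∀ n : ℕ, Function.Bijective (j n)) ∧
          ∀ (n : ℕ) (y : T.Hom n 1), j n (qh.map y) = q n y) := by
  refine ⟨QM.part1, ?_, ?_⟩
  · -- Part 2: Q reflects isomorphisms
    intro T T' F hbij
    have hbij' : ∀ a b : ℕ, Function.Bijective fun f : T.Hom a b => F.map f := by
      intro a b
      constructor
      · intro f f' hff
        apply LawTheory.hom_ext
        intro i
        have h2 : F.map (T.comp f (T.proj b i)) = F.map (T.comp f' (T.proj b i)) := by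
          rw [F.map_comp, F.map_comp]
          exact congrArg (fun z => T'.comp z (F.map (T.proj b i))) hff
        exact (hbij a).injective h2
      · intro g
        choose x hx using fun i => (hbij a).surjective (T'.comp g (T'.proj b i))
        refine ⟨T.tuple x, ?_⟩
        show F.map (T.tuple x) = g
        rw [LawHom.map_tuple]
        have h3 : (fun i => F.map (x i)) = fun i => T'.comp g (T'.proj b i) :=
          funext fun i => hx i
        rw [h3, T'.tuple_eta]
    have hGF : ∀ (a b : ℕ) (f : T.Hom a b),
        Function.surjInv (hbij' a b).surjective (F.map f) = f := fun a b f =>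
      Function.leftInverse_surjInv (hbij' a b) f
    have hFG : ∀ (a b : ℕ) (g : T'.Hom a b),
        F.map (Function.surjInv (hbij' a b).surjective g) = g := fun a b g =>
      Function.surjInv_eq (hbij' a b).surjective g
    refine ⟨{ map := fun {a b} g => Function.surjInv (hbij' a b).surjective g
              map_id := by
                intro n
                rw [← F.map_id n]
                exact hGF n n _
              map_comp := by
                intro a b c f g
                apply (hbij' a c).injective
                show F.map _ = F.map _
                rw [hFG, F.map_comp, hFG, hFG]
              map_proj := by
                intro n i
                rw [← F.map_proj n i]
                exact hGF n 1 _ },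
            fun a b f => hGF a b f, fun a b g => hFG a b g⟩
  · -- Part 3: coequalizers of Q-split pairs
    intro T' T F F' O q s t Hq Hs ht1 htc hta hqFF' hqs hFt hF't
    have factA : ∀ {a b c : ℕ} (x : T.Hom a b) (y : T.Hom b c),
        QM.qhat T O q (T.comp x y) =
          QM.qhat T O q (T.comp (QM.shat T O s (QM.qhat T O q x))
            (QM.shat T O s (QM.qhat T O q y))) := by
      intro a b c x y
      funext j
      have hF : F.map (T'.comp (T'.tuple fun i => t a (T.comp x (T.proj b i)))
          (t b (T.comp y (T.proj c j)))) = T.comp x (T.comp y (T.proj c j)) := by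
        rw [F.map_comp, LawHom.map_tuple]
        simp only [hFt]
        rw [T.tuple_eta]
      have hF'w : F'.map (T'.comp (T'.tuple fun i => t a (T.comp x (T.proj b i)))
          (t b (T.comp y (T.proj c j)))) =
          T.comp (T.tuple fun i => s a (q a (T.comp x (T.proj b i))))
            (s b (q b (T.comp y (T.proj c j)))) := by
        rw [F'.map_comp, LawHom.map_tuple]
        simp only [hF't]
      show q a (T.comp (T.comp x y) (T.proj c j)) =
        q a (T.comp (T.comp (T.tuple fun i => s a (q a (T.comp x (T.proj b i))))
          (T.tuple fun i => s b (q b (T.comp y (T.proj c i))))) (T.proj c j))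
      rw [T.assoc, T.assoc, T.tuple_proj, ← hF, ← hF'w]
      exact hqFF' a _
    have factB : ∀ {a b : ℕ} (α : Fin b → O.ops a),
        QM.qhat T O q (QM.shat T O s α) = α := by
      intro a b α
      funext i
      show q a (T.comp (T.tuple fun r => s a (α r)) (T.proj b i)) = α i
      rw [T.tuple_proj, hqs]
    have factA' : ∀ {a b c : ℕ} {x x' : T.Hom a b} {y y' : T.Hom b c},
        QM.qhat T O q x = QM.qhat T O q x' → QM.qhat T O q y = QM.qhat T O q y' →
        QM.qhat T O q (T.comp x y) = QM.qhat T O q (T.comp x' y') := by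
      intro a b c x x' y y' hx hy
      rw [factA x y, hx, hy, ← factA x' y']
    have factU : ∀ {a : ℕ} (x y : T.Hom a 1),
        QM.qhat T O q x = QM.qhat T O q y → q a x = q a y := by
      intro a x y hxy
      have hp : T.comp (T.tuple fun _ : Fin 1 => T.id 1) (T.proj 1 0) = T.id 1 :=
        T.tuple_proj _ 0
      have hz : ∀ z : T.Hom a 1,
          q a z = QM.qhat T O q (T.comp z (T.tuple fun _ : Fin 1 => T.id 1)) 0 := by
        intro z
        show q a z = q a (T.comp (T.comp z (T.tuple fun _ : Fin 1 => T.id 1)) (T.proj 1 0))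
        rw [T.assoc, hp, T.comp_id]
      rw [hz x, hz y]
      exact congrFun (factA' hxy rfl) 0
    have factV : ∀ {a : ℕ} (x y : T.Hom a 1),
        q a x = q a y → QM.qhat T O q x = QM.qhat T O q y := by
      intro a x y hxy
      have key : ∀ (z : T.Hom a 1) (i : Fin 1), q a (T.comp z (T.proj 1 i)) =
          q a (T.comp (s a (q a z)) (s 1 (q 1 (T.proj 1 i)))) := by
        intro z i
        have h1 : F.map (T'.comp (t a z) (t 1 (T.proj 1 i))) = T.comp z (T.proj 1 i) := by
          rw [F.map_comp, hFt, hFt]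
        have h2 : F'.map (T'.comp (t a z) (t 1 (T.proj 1 i))) =
            T.comp (s a (q a z)) (s 1 (q 1 (T.proj 1 i))) := by
          rw [F'.map_comp, hF't, hF't]
        rw [← h1, ← h2]
        exact hqFF' a _
      funext i
      show q a (T.comp x (T.proj 1 i)) = q a (T.comp y (T.proj 1 i))
      rw [key x i, key y i, hxy]
    have qhat_tuple : ∀ {a n : ℕ} (hs : Fin n → T.Hom a 1),
        QM.qhat T O q (T.tuple hs) = fun i => q a (hs i) := by
      intro a n hs
      funext i
      show q a (T.comp (T.tuple hs) (T.proj n i)) = q a (hs i)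
      rw [T.tuple_proj]
    have jq : ∀ {n : ℕ} (y : T.Hom n 1),
        q n (QM.shat T O s (QM.qhat T O q y)) = q n y :=
      fun y => factU _ _ (factB _)
    let T₀ : LawTheory :=
      { Hom := fun a b => Fin b → O.ops a
        id := fun n => QM.qhat T O q (T.id n)
        comp := fun {a b c} X Y => QM.qhat T O q (T.comp (QM.shat T O s X) (QM.shat T O s Y))
        proj := fun n i => QM.qhat T O q (T.proj n i)
        tuple := fun {a n} fs i => q a (QM.shat T O s (fs i))
        id_comp := by
          intro a b f
          show QM.qhat T O q (T.comp (QM.shat T O s (QM.qhat T O q (T.id a)))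
            (QM.shat T O s f)) = f
          rw [factA' (factB _) rfl, T.id_comp, factB]
        comp_id := by
          intro a b f
          show QM.qhat T O q (T.comp (QM.shat T O s f)
            (QM.shat T O s (QM.qhat T O q (T.id b)))) = f
          rw [factA' rfl (factB _), T.comp_id, factB]
        assoc := by
          intro a b c d f g k
          show QM.qhat T O q (T.comp (QM.shat T O s (QM.qhat T O q
              (T.comp (QM.shat T O s f) (QM.shat T O s g)))) (QM.shat T O s k)) =
            QM.qhat T O q (T.comp (QM.shat T O s f) (QM.shat T O s (QM.qhat T O q
              (T.comp (QM.shat T O s g) (QM.shat T O s k)))))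
          rw [factA' (factB _) rfl, factA' rfl (factB _), T.assoc]
        tuple_proj := by
          intro a n fs i
          show QM.qhat T O q (T.comp (QM.shat T O s (fun r => q a (QM.shat T O s (fs r))))
            (QM.shat T O s (QM.qhat T O q (T.proj n i)))) = fs i
          rw [factA' ((factB _).trans (qhat_tuple _).symm) (factB _), T.tuple_proj, factB]
        tuple_eta := by
          intro a n g
          funext i
          show q a (QM.shat T O s (QM.qhat T O q (T.comp (QM.shat T O s g)
            (QM.shat T O s (QM.qhat T O q (T.proj n i)))))) = g i
          rw [factA' rfl (factB _)]
          rw [show T.comp (QM.shat T O s g) (T.proj n i) = s a (g i) from T.tuple_proj _ i]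
          rw [factU _ _ (factB _), hqs] }
    let qh : LawHom T T₀ :=
      { map := fun {a b} x => QM.qhat T O q x
        map_id := fun n => rfl
        map_comp := fun f g => factA f g
        map_proj := fun n i => rfl }
    refine ⟨T₀, qh, ?_, ?_, ?_⟩
    · intro a b x
      show QM.qhat T O q (F.map x) = QM.qhat T O q (F'.map x)
      funext i
      show q a (T.comp (F.map x) (T.proj b i)) = q a (T.comp (F'.map x) (T.proj b i))
      have e1 : T.comp (F.map x) (T.proj b i) = F.map (T'.comp x (T'.proj b i)) := by
        rw [F.map_comp, F.map_proj]
      have e2 : T.comp (F'.map x) (T.proj b i) = F'.map (T'.comp x (T'.proj b i)) := by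
        rw [F'.map_comp, F'.map_proj]
      rw [e1, e2]
      exact hqFF' a _
    · intro T₂ p hp
      have punary : ∀ {a : ℕ} (z : T.Hom a 1), p.map z = p.map (s a (q a z)) := by
        intro a z
        conv_lhs => rw [← hFt a z]
        rw [hp, hF't]
      have pfactor : ∀ {a b : ℕ} (x : T.Hom a b),
          p.map x = p.map (QM.shat T O s (QM.qhat T O q x)) := by
        intro a b x
        conv_lhs => rw [← T.tuple_eta x]
        rw [LawHom.map_tuple]
        show _ = p.map (T.tuple fun i => s a (q a (T.comp x (T.proj b i))))
        rw [LawHom.map_tuple]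
        congr 1
        funext i
        exact punary _
      refine ⟨{ map := fun {a b} α => p.map (QM.shat T O s α)
                map_id := by
                  intro n
                  show p.map (QM.shat T O s (QM.qhat T O q (T.id n))) = T₂.id n
                  rw [← pfactor, p.map_id]
                map_comp := by
                  intro a b c f g
                  show p.map (QM.shat T O s (QM.qhat T O q
                    (T.comp (QM.shat T O s f) (QM.shat T O s g)))) = _
                  rw [← pfactor, p.map_comp]
                map_proj := by
                  intro n i
                  show p.map (QM.shat T O s (QM.qhat T O q (T.proj n i))) = T₂.proj n i
                  rw [← pfactor, p.map_proj] },
              fun a b y => (pfactor y).symm, ?_⟩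
      intro k' hk'
      apply LawHom.ext
      intro a b α
      have hα : α = QM.qhat T O q (QM.shat T O s α) := (factB α).symm
      calc k'.map α = k'.map (QM.qhat T O q (QM.shat T O s α)) := by rw [← hα]
        _ = p.map (QM.shat T O s α) := hk' a b (QM.shat T O s α)
    · refine ⟨fun n α => q n (QM.shat T O s α), ⟨?_, ?_, ?_⟩, ?_, fun n y => jq y⟩
      · show q 1 (QM.shat T O s (QM.qhat T O q (T.id 1))) = O.unit
        rw [jq]
        exact Hq.1
      · intro k ns fs f
        have e1 : T₀.opComp ns fs f =
            QM.qhat T O q (T.opComp ns (fun i => QM.shat T O s (fs i)) (QM.shat T O s f)) := by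
          conv_lhs => rw [show f = QM.qhat T O q (QM.shat T O s f) from (factB f).symm,
            show fs = fun i => QM.qhat T O q (QM.shat T O s (fs i)) from
              funext fun i => (factB (fs i)).symm]
          exact (LawHom.map_opComp qh ns (fun i => QM.shat T O s (fs i)) (QM.shat T O s f)).symm
        show q _ (QM.shat T O s (T₀.opComp ns fs f)) =
          O.comp ns (fun i => q _ (QM.shat T O s (fs i))) (q k (QM.shat T O s f))
        rw [e1, jq]
        exact Hq.2.1 ns (fun i => QM.shat T O s (fs i)) (QM.shat T O s f)
      · intro n σ f
        have e1 : T₀.opAct σ f = QM.qhat T O q (T.opAct σ (QM.shat T O s f)) := by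
          conv_lhs => rw [show f = QM.qhat T O q (QM.shat T O s f) from (factB f).symm]
          exact (LawHom.map_opAct qh σ (QM.shat T O s f)).symm
        show q n (QM.shat T O s (T₀.opAct σ f)) = O.act σ (q n (QM.shat T O s f))
        rw [e1, jq]
        exact Hq.2.2 σ (QM.shat T O s f)
      · intro n
        constructor
        · intro α β hab
          have h2 := factV _ _ hab
          rwa [factB, factB] at h2
        · intro y
          refine ⟨QM.qhat T O q (s n y), ?_⟩
          show q n (QM.shat T O s (QM.qhat T O q (s n y))) = y
          rw [jq, hqs]
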